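/- Let d ≥ 3 and let L ≤ ℤ^d be a full-rank subgroup such that every orientation-preserving automorphism of L extends to an orientation-preserving automorphism of ℤ^d (under the inclusion L ⊆ ℤ^d). Then L = ℓ·ℤ^d for some positive integer ℓ. -/

import Mathlib

lemma toMatrix_constr_transvection {R : Type*} [CommRing R] {W : Type*} [AddCommGroup W]
    [Module R W] {n : ℕ} (bN : Module.Basis (Fin n) R W) (k l : Fin n) (hkl : k ≠ l) :
    LinearMap.toMatrix bN bN (bN.constr R fun i => if i = l then bN k + bN l else bN i)
      = Matrix.transvection k l 1 := by
  ext i j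
  rw [LinearMap.toMatrix_apply, Module.Basis.constr_basis]
  simp only [Matrix.transvection, Matrix.add_apply, Matrix.one_apply,
    Matrix.single, Matrix.of_apply]
  by_cases hj : j = l
  · subst hj
    rw [if_pos rfl, map_add, Finsupp.add_apply, Module.Basis.repr_self_apply,
      Module.Basis.repr_self_apply, if_congr (and_iff_left rfl) rfl rfl,
      if_congr (eq_comm (a := j) (b := i)) rfl rfl]
    exact add_comm _ _
  · rw [if_neg hj, Module.Basis.repr_self_apply, if_neg (fun h : k = i ∧ l = j => hj h.2.symm),
      add_zero, if_congr (eq_comm (a := j) (b := i)) rfl rfl]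

/-- Let `d ≥ 3` and let `L ≤ ℤ^d` be a full-rank subgroup such that every orientation-preserving
automorphism of `L` extends to an orientation-preserving automorphism of `ℤ^d`.
Then `L = ℓ·ℤ^d` for some positive integer `ℓ`. -/
theorem extension_property_implies_homothety (d : ℕ) (hd : 3 ≤ d)
    (L : Submodule ℤ (Fin d → ℤ)) (hrank : Module.finrank ℤ L = d)
    (hext : ∀ ψ : L ≃ₗ[ℤ] L, LinearMap.det ψ.toLinearMap = 1 →
      ∃ Ψ : (Fin d → ℤ) ≃ₗ[ℤ] (Fin d → ℤ), LinearMap.det Ψ.toLinearMap = 1 ∧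
        ∀ x : L, Ψ (x : Fin d → ℤ) = ((ψ x : L) : Fin d → ℤ)) :
    ∃ ℓ : ℕ, 0 < ℓ ∧ ∀ x : Fin d → ℤ, x ∈ L ↔ ∃ y : Fin d → ℤ, x = (ℓ : ℤ) • y := by
  classical
  obtain ⟨n, bM, bN, f, a, hsnf⟩ := L.smithNormalForm (Pi.basisFun ℤ (Fin d))
  have hn : n = d := by
    have h1 := Module.finrank_eq_card_basis bN
    simp only [Fintype.card_fin] at h1
    omega
  have hfb : Function.Bijective f := by
    rw [Fintype.bijective_iff_injective_and_card]
    exact ⟨f.injective, by simp [hn]⟩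
  -- key divisibility
  have key : ∀ k l : Fin n, k ≠ l → a l ∣ a k := by
    intro k l hkl
    -- transvection automorphism of L : bN l ↦ bN k + bN l, others fixed
    set φ : L →ₗ[ℤ] L := bN.constr ℤ (fun i => if i = l then bN k + bN l else bN i) with hφ
    set φ' : L →ₗ[ℤ] L := bN.constr ℤ (fun i => if i = l then bN l - bN k else bN i) with hφ'
    have happ : ∀ i, φ (bN i) = if i = l then bN k + bN l else bN i := by
      intro i; rw [hφ, Module.Basis.constr_basis]
    have happ' : ∀ i, φ' (bN i) = if i = l then bN l - bN k else bN i := by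
      intro i; rw [hφ', Module.Basis.constr_basis]
    have hc1 : φ.comp φ' = LinearMap.id := by
      apply bN.ext
      intro i
      rw [LinearMap.comp_apply, LinearMap.id_apply, happ' i]
      by_cases hi : i = l
      · rw [if_pos hi, map_sub, happ l, happ k, if_pos rfl, if_neg hkl, hi]
        abel
      · rw [if_neg hi, happ i, if_neg hi]
    have hc2 : φ'.comp φ = LinearMap.id := by
      apply bN.ext
      intro i
      rw [LinearMap.comp_apply, LinearMap.id_apply, happ i]
      by_cases hi : i = l
      · rw [if_pos hi, map_add, happ' l, happ' k, if_pos rfl, if_neg hkl, hi]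
        abel
      · rw [if_neg hi, happ' i, if_neg hi]
    set ψ : L ≃ₗ[ℤ] L := LinearEquiv.ofLinear φ φ' hc1 hc2 with hψ
    have hmat : LinearMap.toMatrix bN bN φ = Matrix.transvection k l 1 := by
      rw [hφ]; exact toMatrix_constr_transvection bN k l hkl
    have hdet : LinearMap.det ψ.toLinearMap = 1 := by
      have hψφ : ψ.toLinearMap = φ := rfl
      rw [hψφ, ← LinearMap.det_toMatrix bN, hmat, Matrix.det_transvection_of_ne _ _ hkl]
    obtain ⟨Ψ, -, hΨ⟩ := hext ψ hdet
    have h1 : Ψ ((bN l : Fin d → ℤ)) = (bN k : Fin d → ℤ) + (bN l : Fin d → ℤ) := by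
      rw [hΨ (bN l)]
      have hψl : ψ (bN l) = bN k + bN l := by
        rw [hψ, LinearEquiv.ofLinear_apply, happ l, if_pos rfl]
      rw [hψl, Submodule.coe_add]
    rw [hsnf l, hsnf k, map_smul] at h1
    have h2 := congrArg (fun v => bM.repr v (f k)) h1
    simp only [map_smul, map_add, Module.Basis.repr_self, Finsupp.add_apply, Finsupp.smul_apply,
      Finsupp.single_apply, smul_eq_mul] at h2
    rw [if_pos trivial, if_neg (fun h : f l = f k => hkl (f.injective h).symm)] at h2
    rw [mul_one, mul_zero, add_zero] at h2
    exact ⟨_, h2.symm⟩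
  have ha0 : ∀ k, a k ≠ 0 := by
    intro k hk
    have := hsnf k
    rw [hk, zero_smul] at this
    exact bN.ne_zero k (Subtype.ext this)
  have hn0 : 0 < n := by omega
  set k0 : Fin n := ⟨0, hn0⟩ with hk0
  set ℓ : ℕ := (a k0).natAbs with hℓ
  have hℓpos : 0 < ℓ := Nat.pos_of_ne_zero (fun h => ha0 k0 (Int.natAbs_eq_zero.mp h))
  have habs : ∀ k, a k = (ℓ : ℤ) ∨ a k = -(ℓ : ℤ) := by
    intro k
    rw [← Int.natAbs_eq_iff]
    by_cases hk : k = k0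
    · rw [hk]
    · exact Nat.dvd_antisymm
        (Int.natAbs_dvd_natAbs.mpr (key k0 k (Ne.symm hk)))
        (Int.natAbs_dvd_natAbs.mpr (key k k0 hk))
  set s : Fin n → ℤ := fun k => if a k = (ℓ : ℤ) then 1 else -1 with hs
  have hsa : ∀ k, s k * a k = (ℓ : ℤ) ∧ a k = s k * (ℓ : ℤ) := by
    intro k
    rcases habs k with h | h
    · simp [hs, h]
    · have hne : -(ℓ : ℤ) ≠ (ℓ : ℤ) := by omega
      rw [hs]
      simp only [h, if_neg hne]
      constructor <;> ring
  refine ⟨ℓ, hℓpos, fun x => ⟨fun hx => ?_, fun hx => ?_⟩⟩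
  · -- forward
    set m : L := ⟨x, hx⟩ with hm
    have hxe : x = (m : Fin d → ℤ) := rfl
    have hrep := bN.sum_repr m
    refine ⟨∑ i : Fin n, (bN.repr m i * s i) • bM (f i), ?_⟩
    have hsum : (m : Fin d → ℤ) = ∑ i : Fin n, (bN.repr m i * a i) • bM (f i) := by
      conv_lhs => rw [← hrep]
      push_cast
      exact Finset.sum_congr rfl fun i _ => by rw [hsnf i, smul_smul]
    rw [hxe, hsum, Finset.smul_sum]
    refine Finset.sum_congr rfl fun i _ => ?_
    rw [smul_smul]
    congr 1
    rw [(hsa i).2]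
    ring
  · -- backward
    obtain ⟨y, rfl⟩ := hx
    have hrep := bM.sum_repr y
    rw [← hrep, Finset.smul_sum]
    apply Submodule.sum_mem
    intro i _
    obtain ⟨k, rfl⟩ := hfb.2 i
    have : (ℓ : ℤ) • bM.repr y (f k) • bM (f k)
        = (s k * bM.repr y (f k)) • (bN k : Fin d → ℤ) := by
      rw [hsnf k, smul_smul, smul_smul]
      congr 1
      rw [← (hsa k).1]
      ring
    rw [this]
    exact Submodule.smul_mem _ _ (SetLike.coe_mem (bN k))
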